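/- Suppose the behavior policy μ is ε-away from the target policy π, i.e. max_{x} ∑_{a} |π(a|x) − μ(a|x)| ≤ ε. Then for every Q-function Q and λ ∈ [0,1], ‖R^π_λ Q − Q^π‖ ≤ η ‖Q − Q^π‖, where η = γ(1 − λ + λε)/(1 − λγ) and R^π_λ Q := Q + ∑_{t≥0} (λγ)^t (P^μ)^t (T^π Q − Q). -/

import Mathlib

open scoped BigOperators

noncomputable section

/-- The operator `P^π` on Q-functions. -/
def Pop {X A : Type*} [Fintype X] [Fintype A] (P : X → A → X → ℝ) (π : X → A → ℝ)
    (Q : X × A → ℝ) : X × A → ℝ :=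
  fun p => ∑ y : X, ∑ b : A, P p.1 p.2 y * π y b * Q (y, b)

/-- The Bellman operator `T^π Q = r + γ P^π Q`. -/
def Tpol {X A : Type*} [Fintype X] [Fintype A] (P : X → A → X → ℝ) (π : X → A → ℝ)
    (γ : ℝ) (r : X × A → ℝ) (Q : X × A → ℝ) : X × A → ℝ :=
  r + γ • Pop P π Q

/-- The off-policy corrected λ-operator
`R^π_λ Q = Q + ∑_{t≥0} (λγ)^t (P^μ)^t (T^π Q − Q)`. -/
def Rpi {X A : Type*} [Fintype X] [Fintype A] (P : X → A → X → ℝ) (π μ : X → A → ℝ)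
    (γ lam : ℝ) (r : X × A → ℝ) (Q : X × A → ℝ) : X × A → ℝ :=
  Q + ∑' t : ℕ, (lam * γ) ^ t • (Pop P μ)^[t] (Tpol P π γ r Q - Q)



section aux
variable {X A : Type*} [Fintype X] [Fintype A]

lemma Pop_sub (P : X → A → X → ℝ) (π : X → A → ℝ) (Q R : X × A → ℝ) :
    Pop P π (Q - R) = Pop P π Q - Pop P π R := by
  funext p
  simp only [Pop, Pi.sub_apply, ← Finset.sum_sub_distrib]
  exact Finset.sum_congr rfl fun y _ => Finset.sum_congr rfl fun b _ => by ring

lemma Pop_add (P : X → A → X → ℝ) (π : X → A → ℝ) (Q R : X × A → ℝ) :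
    Pop P π (Q + R) = Pop P π Q + Pop P π R := by
  funext p
  simp only [Pop, Pi.add_apply, ← Finset.sum_add_distrib]
  exact Finset.sum_congr rfl fun y _ => Finset.sum_congr rfl fun b _ => by ring

lemma Pop_smul (P : X → A → X → ℝ) (π : X → A → ℝ) (c : ℝ) (Q : X × A → ℝ) :
    Pop P π (c • Q) = c • Pop P π Q := by
  funext p
  simp only [Pop, Pi.smul_apply, smul_eq_mul, Finset.mul_sum]
  exact Finset.sum_congr rfl fun y _ => Finset.sum_congr rfl fun b _ => by ring

lemma Pop_norm_le (P : X → A → X → ℝ) (π : X → A → ℝ)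
    (hP0 : ∀ x a y, 0 ≤ P x a y) (hP1 : ∀ x a, ∑ y : X, P x a y = 1)
    (hπ0 : ∀ x a, 0 ≤ π x a) (hπ1 : ∀ x, ∑ a : A, π x a = 1)
    (Q : X × A → ℝ) : ‖Pop P π Q‖ ≤ ‖Q‖ := by
  rw [pi_norm_le_iff_of_nonneg (norm_nonneg Q)]
  intro p
  rw [Real.norm_eq_abs]
  calc |∑ y : X, ∑ b : A, P p.1 p.2 y * π y b * Q (y, b)|
      ≤ ∑ y : X, ∑ b : A, |P p.1 p.2 y * π y b * Q (y, b)| := by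
        refine (Finset.abs_sum_le_sum_abs _ _).trans ?_
        exact Finset.sum_le_sum fun y _ => Finset.abs_sum_le_sum_abs _ _
    _ ≤ ∑ y : X, ∑ b : A, P p.1 p.2 y * π y b * ‖Q‖ := by
        refine Finset.sum_le_sum fun y _ => Finset.sum_le_sum fun b _ => ?_
        rw [abs_mul, abs_of_nonneg (mul_nonneg (hP0 _ _ _) (hπ0 _ _))]
        exact mul_le_mul_of_nonneg_left
          ((Real.norm_eq_abs _ ▸ norm_le_pi_norm Q (y, b)))
          (mul_nonneg (hP0 _ _ _) (hπ0 _ _))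
    _ = ‖Q‖ := by
        have : ∀ y, ∑ b : A, P p.1 p.2 y * π y b * ‖Q‖ = P p.1 p.2 y * ‖Q‖ := fun y => by
          rw [← Finset.sum_mul, ← Finset.mul_sum, hπ1, mul_one]
        rw [Finset.sum_congr rfl fun y _ => this y, ← Finset.sum_mul, hP1, one_mul]

lemma Pop_diff_le {X A : Type*} [Fintype X] [Fintype A] [Nonempty X]
    (P : X → A → X → ℝ) (π μ : X → A → ℝ)
    (hP0 : ∀ x a y, 0 ≤ P x a y) (hP1 : ∀ x a, ∑ y : X, P x a y = 1)
    (ε : ℝ) (hε : ∀ x, ∑ a : A, |π x a - μ x a| ≤ ε)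
    (Q : X × A → ℝ) : ‖Pop P π Q - Pop P μ Q‖ ≤ ε * ‖Q‖ := by
  have hε0 : 0 ≤ ε := le_trans (Finset.sum_nonneg fun a _ => abs_nonneg _)
    (hε (Classical.arbitrary X))
  rw [pi_norm_le_iff_of_nonneg (mul_nonneg hε0 (norm_nonneg Q))]
  intro p
  rw [Real.norm_eq_abs]
  have heq : (Pop P π Q - Pop P μ Q) p
      = ∑ y : X, ∑ b : A, P p.1 p.2 y * (π y b - μ y b) * Q (y, b) := by
    simp only [Pop, Pi.sub_apply, ← Finset.sum_sub_distrib]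
    exact Finset.sum_congr rfl fun y _ => Finset.sum_congr rfl fun b _ => by ring
  rw [heq]
  calc |∑ y : X, ∑ b : A, P p.1 p.2 y * (π y b - μ y b) * Q (y, b)|
      ≤ ∑ y : X, ∑ b : A, |P p.1 p.2 y * (π y b - μ y b) * Q (y, b)| := by
        refine (Finset.abs_sum_le_sum_abs _ _).trans ?_
        exact Finset.sum_le_sum fun y _ => Finset.abs_sum_le_sum_abs _ _
    _ ≤ ∑ y : X, ∑ b : A, P p.1 p.2 y * |π y b - μ y b| * ‖Q‖ := by
        refine Finset.sum_le_sum fun y _ => Finset.sum_le_sum fun b _ => ?_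
        rw [abs_mul, abs_mul, abs_of_nonneg (hP0 _ _ _)]
        exact mul_le_mul_of_nonneg_left
          ((Real.norm_eq_abs _ ▸ norm_le_pi_norm Q (y, b)))
          (mul_nonneg (hP0 _ _ _) (abs_nonneg _))
    _ ≤ ∑ y : X, P p.1 p.2 y * ε * ‖Q‖ := by
        refine Finset.sum_le_sum fun y _ => ?_
        have : ∑ b : A, P p.1 p.2 y * |π y b - μ y b| * ‖Q‖
            = P p.1 p.2 y * (∑ b : A, |π y b - μ y b|) * ‖Q‖ := by
          rw [Finset.mul_sum, Finset.sum_mul]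
        rw [this]
        exact mul_le_mul_of_nonneg_right
          (mul_le_mul_of_nonneg_left (hε y) (hP0 _ _ _)) (norm_nonneg Q)
    _ = ε * ‖Q‖ := by
        have : ∑ y : X, P p.1 p.2 y * ε * ‖Q‖ = (∑ y : X, P p.1 p.2 y) * ε * ‖Q‖ := by
          rw [Finset.sum_mul, Finset.sum_mul]
        rw [this, hP1, one_mul]

end aux

section iter
variable {X A : Type*} [Fintype X] [Fintype A]

lemma Pop_iter_smul (P : X → A → X → ℝ) (μ : X → A → ℝ) (c : ℝ) (f : X × A → ℝ) :
    ∀ t : ℕ, (Pop P μ)^[t] (c • f) = c • (Pop P μ)^[t] f := by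
  intro t
  induction t generalizing f with
  | zero => simp
  | succ t ih => rw [Function.iterate_succ_apply, Function.iterate_succ_apply,
      Pop_smul, ih]

lemma Pop_iter_add (P : X → A → X → ℝ) (μ : X → A → ℝ) (f g : X × A → ℝ) :
    ∀ t : ℕ, (Pop P μ)^[t] (f + g) = (Pop P μ)^[t] f + (Pop P μ)^[t] g := by
  intro t
  induction t generalizing f g with
  | zero => simp
  | succ t ih => rw [Function.iterate_succ_apply, Function.iterate_succ_apply,
      Function.iterate_succ_apply, Pop_add, ih]

lemma Pop_iter_sub (P : X → A → X → ℝ) (μ : X → A → ℝ) (f g : X × A → ℝ) :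
    ∀ t : ℕ, (Pop P μ)^[t] (f - g) = (Pop P μ)^[t] f - (Pop P μ)^[t] g := by
  intro t
  induction t generalizing f g with
  | zero => simp
  | succ t ih => rw [Function.iterate_succ_apply, Function.iterate_succ_apply,
      Function.iterate_succ_apply, Pop_sub, ih]

lemma Pop_iter_norm_le (P : X → A → X → ℝ) (μ : X → A → ℝ)
    (hP0 : ∀ x a y, 0 ≤ P x a y) (hP1 : ∀ x a, ∑ y : X, P x a y = 1)
    (hμ0 : ∀ x a, 0 ≤ μ x a) (hμ1 : ∀ x, ∑ a : A, μ x a = 1)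
    (f : X × A → ℝ) : ∀ t : ℕ, ‖(Pop P μ)^[t] f‖ ≤ ‖f‖ := by
  intro t
  induction t with
  | zero => simp
  | succ t ih =>
      rw [Function.iterate_succ_apply']
      exact (Pop_norm_le P μ hP0 hP1 hμ0 hμ1 _).trans ih

end iter

/-- if μ is ε-away from π, then `R^π_λ` satisfies
`‖R^π_λ Q − Q^π‖ ≤ η ‖Q − Q^π‖` with `η = γ(1 − λ + λε)/(1 − λγ)`. -/
theorem stmt6 {X A : Type*} [Fintype X] [Fintype A] [Nonempty X] [Nonempty A]
    (P : X → A → X → ℝ)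
    (hP0 : ∀ x a y, 0 ≤ P x a y) (hP1 : ∀ x a, ∑ y : X, P x a y = 1)
    (π μ : X → A → ℝ)
    (hπ0 : ∀ x a, 0 ≤ π x a) (hπ1 : ∀ x, ∑ a : A, π x a = 1)
    (hμ0 : ∀ x a, 0 ≤ μ x a) (hμ1 : ∀ x, ∑ a : A, μ x a = 1)
    (ε : ℝ) (hε : ∀ x, ∑ a : A, |π x a - μ x a| ≤ ε)
    (γ : ℝ) (hγ0 : 0 ≤ γ) (hγ1 : γ < 1)
    (lam : ℝ) (hl0 : 0 ≤ lam) (hl1 : lam ≤ 1)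
    (r : X × A → ℝ) (Qπ : X × A → ℝ)
    (hQπ : Qπ = r + γ • Pop P π Qπ)
    (Q : X × A → ℝ) :
    ‖Rpi P π μ γ lam r Q - Qπ‖ ≤
      γ * (1 - lam + lam * ε) / (1 - lam * γ) * ‖Q - Qπ‖ := by
  set Δ := Q - Qπ with hΔ
  set c := lam * γ with hc
  have hc0 : (0:ℝ) ≤ c := mul_nonneg hl0 hγ0
  have hc1 : c < 1 := lt_of_le_of_lt (mul_le_of_le_one_left hγ0 hl1) hγ1
  have hcpos : (0:ℝ) < 1 - c := by linarith
  have hsum : ∀ f : X × A → ℝ, Summable (fun t : ℕ => c ^ t • (Pop P μ)^[t] f) := by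
    intro f
    refine Summable.of_norm_bounded
      ((summable_geometric_of_lt_one hc0 hc1).mul_right ‖f‖) (fun t => ?_)
    rw [norm_smul, Real.norm_eq_abs, abs_of_nonneg (pow_nonneg hc0 t)]
    exact mul_le_mul_of_nonneg_left (Pop_iter_norm_le P μ hP0 hP1 hμ0 hμ1 f t)
      (pow_nonneg hc0 t)
  have hnormsum : ∀ f : X × A → ℝ, Summable (fun t : ℕ => ‖c ^ t • (Pop P μ)^[t] f‖) := by
    intro f
    refine Summable.of_nonneg_of_le (fun t => norm_nonneg _) (fun t => ?_)
      ((summable_geometric_of_lt_one hc0 hc1).mul_right ‖f‖)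
    rw [norm_smul, Real.norm_eq_abs, abs_of_nonneg (pow_nonneg hc0 t)]
    exact mul_le_mul_of_nonneg_left (Pop_iter_norm_le P μ hP0 hP1 hμ0 hμ1 f t)
      (pow_nonneg hc0 t)
  have hSnorm : ∀ f : X × A → ℝ,
      ‖∑' t : ℕ, c ^ t • (Pop P μ)^[t] f‖ ≤ (1 - c)⁻¹ * ‖f‖ := by
    intro f
    calc ‖∑' t : ℕ, c ^ t • (Pop P μ)^[t] f‖
        ≤ ∑' t : ℕ, ‖c ^ t • (Pop P μ)^[t] f‖ := norm_tsum_le_tsum_norm (hnormsum f)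
      _ ≤ ∑' t : ℕ, c ^ t * ‖f‖ := by
          refine Summable.tsum_le_tsum (fun t => ?_) (hnormsum f)
            ((summable_geometric_of_lt_one hc0 hc1).mul_right ‖f‖)
          rw [norm_smul, Real.norm_eq_abs, abs_of_nonneg (pow_nonneg hc0 t)]
          exact mul_le_mul_of_nonneg_left
            (Pop_iter_norm_le P μ hP0 hP1 hμ0 hμ1 f t) (pow_nonneg hc0 t)
      _ = (1 - c)⁻¹ * ‖f‖ := by
          rw [tsum_mul_right, tsum_geometric_of_lt_one hc0 hc1]
  set h := γ • Pop P π Δ - c • Pop P μ Δ with hh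
  have hg : Tpol P π γ r Q - Q = h + c • Pop P μ Δ - Δ := by
    have hr : r = Qπ - γ • Pop P π Qπ := by rw [eq_sub_iff_add_eq]; exact hQπ.symm
    rw [hh, Tpol, hr, hΔ, Pop_sub, smul_sub]
    abel
  have hshift : ∑' t : ℕ, c ^ t • (Pop P μ)^[t] Δ
      = Δ + ∑' t : ℕ, c ^ t • (Pop P μ)^[t] (c • Pop P μ Δ) := by
    rw [Summable.tsum_eq_zero_add (hsum Δ)]
    simp only [pow_zero, one_smul, Function.iterate_zero_apply]
    congr 1
    refine tsum_congr fun t => ?_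
    rw [Function.iterate_succ_apply, Pop_iter_smul, pow_succ, mul_smul]
  have hV : Rpi P π μ γ lam r Q - Qπ = ∑' t : ℕ, c ^ t • (Pop P μ)^[t] h := by
    have step1 : Rpi P π μ γ lam r Q - Qπ
        = Δ + ∑' t : ℕ, c ^ t • (Pop P μ)^[t] (Tpol P π γ r Q - Q) := by
      rw [Rpi, hΔ, ← hc]; abel
    rw [step1, hg]
    have step2 : ∀ t : ℕ, c ^ t • (Pop P μ)^[t] (h + c • Pop P μ Δ - Δ)
        = c ^ t • (Pop P μ)^[t] h + c ^ t • (Pop P μ)^[t] (c • Pop P μ Δ)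
          - c ^ t • (Pop P μ)^[t] Δ := by
      intro t
      rw [Pop_iter_sub, Pop_iter_add, smul_sub, smul_add]
    rw [tsum_congr step2, Summable.tsum_sub ((hsum h).add (hsum _)) (hsum Δ),
      Summable.tsum_add (hsum h) (hsum _), hshift]
    abel
  have hεnn : 0 ≤ ε := le_trans (Finset.sum_nonneg fun a _ => abs_nonneg _)
    (hε (Classical.arbitrary X))
  have hhn : ‖h‖ ≤ (γ * (1 - lam) + c * ε) * ‖Δ‖ := by
    have hdec : h = (γ * (1 - lam)) • Pop P π Δ + c • (Pop P π Δ - Pop P μ Δ) := by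
      rw [hh, hc]; module
    rw [hdec]
    calc ‖(γ * (1 - lam)) • Pop P π Δ + c • (Pop P π Δ - Pop P μ Δ)‖
        ≤ ‖(γ * (1 - lam)) • Pop P π Δ‖ + ‖c • (Pop P π Δ - Pop P μ Δ)‖ :=
          norm_add_le _ _
      _ ≤ γ * (1 - lam) * ‖Δ‖ + c * (ε * ‖Δ‖) := by
          rw [norm_smul, norm_smul, Real.norm_eq_abs, Real.norm_eq_abs,
            abs_of_nonneg (mul_nonneg hγ0 (by linarith : (0:ℝ) ≤ 1 - lam)),
            abs_of_nonneg hc0]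
          exact add_le_add
            (mul_le_mul_of_nonneg_left (Pop_norm_le P π hP0 hP1 hπ0 hπ1 Δ)
              (mul_nonneg hγ0 (by linarith)))
            (mul_le_mul_of_nonneg_left (Pop_diff_le P π μ hP0 hP1 ε hε Δ) hc0)
      _ = (γ * (1 - lam) + c * ε) * ‖Δ‖ := by ring
  have hne : (1:ℝ) - c ≠ 0 := ne_of_gt hcpos
  calc ‖Rpi P π μ γ lam r Q - Qπ‖
      = ‖∑' t : ℕ, c ^ t • (Pop P μ)^[t] h‖ := by rw [hV]
    _ ≤ (1 - c)⁻¹ * ‖h‖ := hSnorm h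
    _ ≤ (1 - c)⁻¹ * ((γ * (1 - lam) + c * ε) * ‖Δ‖) :=
        mul_le_mul_of_nonneg_left hhn (inv_nonneg.2 hcpos.le)
    _ = γ * (1 - lam + lam * ε) / (1 - c) * ‖Δ‖ := by
        have hK : γ * (1 - lam) + c * ε = γ * (1 - lam + lam * ε) := by rw [hc]; ring
        rw [← mul_assoc, hK, div_eq_mul_inv,
          mul_comm (γ * (1 - lam + lam * ε)) (1 - c)⁻¹]
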